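/- Let B = diag(λ₁², …, λₙ²) with λ₁, …, λₙ ∈ ℝ. Then the following vector fields on ℝ^{n+2} are Killing for g_B: K₊ = −∂₊; K₋ = −∂₋; for each i = 1,…,n, K_{(i)} = cos(λ_i x⁻)∂_i + λ_i sin(λ_i x⁻) x^i ∂₊ and K_{(i*)} = −λ_i sin(λ_i x⁻)∂_i + λ_i² cos(λ_i x⁻) x^i ∂₊; and for each pair i ≠ j with λ_i² = λ_j², K_{(ij)} = x^j ∂_i − x^i ∂_j. -/

import Mathlib

open Matrix

/-- Index type for the coordinates `(x⁺, x⁻, x¹, …, xⁿ)` on `ℝ^{n+2}`: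
`Sum.inl 0` is the index `+`, `Sum.inl 1` is the index `−`, and `Sum.inr i` is `i`. -/
abbrev CWIdx (n : ℕ) : Type := Fin 2 ⊕ Fin n

/-- Points of `ℝ^{n+2}`. -/
abbrev CWPt (n : ℕ) : Type := CWIdx n → ℝ

/-- The coefficients of the Cahen–Wallach metric `g_B`. -/
noncomputable def gB {n : ℕ} (B : Matrix (Fin n) (Fin n) ℝ) (x : CWPt n) :
    CWIdx n → CWIdx n → ℝ :=
  fun μ ν => match μ, ν with
  | .inl a, .inl b =>
      if a = 0 ∧ b = 1 then 1
      else if a = 1 ∧ b = 0 then 1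
      else if a = 1 ∧ b = 1 then -(∑ i, ∑ j, B i j * x (.inr i) * x (.inr j))
      else 0
  | .inr i, .inr j => if i = j then 1 else 0
  | _, _ => 0

/-- Partial derivative `∂_μ f` of a scalar function on `ℝ^{n+2}`. -/
noncomputable def pd {n : ℕ} (μ : CWIdx n) (f : CWPt n → ℝ) (x : CWPt n) : ℝ :=
  fderiv ℝ f x (Pi.single μ 1)

/-- A vector field `X` on `ℝ^{n+2}` is Killing for `g_B`:
`∑_κ X^κ ∂_κ (g_B)_{μν} + ∑_κ (∂_μ X^κ)(g_B)_{κν} + ∑_κ (∂_ν X^κ)(g_B)_{μκ} = 0`. -/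
def IsKilling {n : ℕ} (B : Matrix (Fin n) (Fin n) ℝ) (X : CWPt n → CWPt n) : Prop :=
  ∀ (x : CWPt n) (μ ν : CWIdx n),
    (∑ κ, X x κ * pd κ (fun y => gB B y μ ν) x)
      + (∑ κ, pd μ (fun y => X y κ) x * gB B x κ ν)
      + (∑ κ, pd ν (fun y => X y κ) x * gB B x μ κ) = 0

/-- `K₊ = −∂₊`. -/
noncomputable def Kplus {n : ℕ} : CWPt n → CWPt n := fun _ => -Pi.single (Sum.inl 0) 1

/-- `K₋ = −∂₋`. -/
noncomputable def Kminus {n : ℕ} : CWPt n → CWPt n := fun _ => -Pi.single (Sum.inl 1) 1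

/-- `K_{(i)} = cos(λ_i x⁻)∂_i + λ_i sin(λ_i x⁻) x^i ∂₊`. -/
noncomputable def Ki {n : ℕ} (lam : Fin n → ℝ) (i : Fin n) : CWPt n → CWPt n := fun x =>
  Pi.single (Sum.inr i) (Real.cos (lam i * x (Sum.inl 1)))
    + Pi.single (Sum.inl 0) (lam i * Real.sin (lam i * x (Sum.inl 1)) * x (Sum.inr i))

/-- `K_{(i*)} = −λ_i sin(λ_i x⁻)∂_i + λ_i² cos(λ_i x⁻) x^i ∂₊`. -/
noncomputable def Kistar {n : ℕ} (lam : Fin n → ℝ) (i : Fin n) : CWPt n → CWPt n := fun x =>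
  Pi.single (Sum.inr i) (-(lam i * Real.sin (lam i * x (Sum.inl 1))))
    + Pi.single (Sum.inl 0) (lam i ^ 2 * Real.cos (lam i * x (Sum.inl 1)) * x (Sum.inr i))

/-- `K_{(ij)} = x^j ∂_i − x^i ∂_j`. -/
noncomputable def Kij {n : ℕ} (i j : Fin n) : CWPt n → CWPt n := fun x =>
  Pi.single (Sum.inr i) (x (Sum.inr j)) - Pi.single (Sum.inr j) (x (Sum.inr i))

set_option maxHeartbeats 1000000
set_option linter.unreachableTactic false
set_option linter.unusedTactic false
set_option linter.unnecessarySeqFocus false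

section KillingHelpers
variable {n : ℕ}

noncomputable def prj (ν : CWIdx n) : CWPt n →L[ℝ] ℝ :=
  ContinuousLinearMap.proj (R := ℝ) (φ := fun _ : CWIdx n => ℝ) ν

@[simp] lemma prj_apply (ν : CWIdx n) (y : CWPt n) : prj ν y = y ν := rfl

lemma pd_of_hasFDerivAt {f : CWPt n → ℝ} {f' : CWPt n →L[ℝ] ℝ} {x : CWPt n}
    (h : HasFDerivAt f f' x) (μ : CWIdx n) : pd μ f x = f' (Pi.single μ 1) := by
  rw [pd, h.fderiv]

lemma hasFDerivAt_coord (ν : CWIdx n) (x : CWPt n) :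
    HasFDerivAt (fun y : CWPt n => y ν) (prj ν) x :=
  (prj ν).hasFDerivAt

lemma pd_const (μ : CWIdx n) (x : CWPt n) (c : ℝ) : pd μ (fun _ => c) x = 0 := by
  simp [pd]

lemma pd_coord (μ ν : CWIdx n) (x : CWPt n) :
    pd μ (fun y => y ν) x = if ν = μ then 1 else 0 := by
  rw [pd_of_hasFDerivAt (hasFDerivAt_coord ν x)]
  simp [Pi.single_apply]

lemma pd_coord_sub (μ a b : CWIdx n) (x : CWPt n) :
    pd μ (fun y => y a - y b) x = (if a = μ then 1 else 0) - (if b = μ then 1 else 0) := by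
  rw [pd_of_hasFDerivAt ((hasFDerivAt_coord a x).fun_sub (hasFDerivAt_coord b x))]
  simp [Pi.single_apply]

lemma pd_neg_coord (μ b : CWIdx n) (x : CWPt n) :
    pd μ (fun y => -(y b)) x = -(if b = μ then 1 else 0) := by
  rw [pd_of_hasFDerivAt ((hasFDerivAt_coord b x).fun_neg)]
  simp [Pi.single_apply]

lemma pd_comp1 {x : CWPt n} {a : ℝ} {f : ℝ → ℝ} {f' : ℝ}
    (hf : HasDerivAt f f' (a * x (Sum.inl 1))) (μ : CWIdx n) :
    pd μ (fun y : CWPt n => f (a * y (Sum.inl 1))) x =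
      if (Sum.inl 1 : CWIdx n) = μ then f' * a else 0 := by
  have h1 : HasFDerivAt (fun y : CWPt n => a * y (Sum.inl 1)) (a • prj (Sum.inl 1)) x :=
    (hasFDerivAt_coord _ x).const_mul a
  have h2 : HasFDerivAt (fun y : CWPt n => f (a * y (Sum.inl 1))) (f' • (a • prj (Sum.inl 1))) x :=
    hf.comp_hasFDerivAt x h1
  rw [pd_of_hasFDerivAt h2]
  by_cases h : (Sum.inl 1 : CWIdx n) = μ
  · subst h; simp [Pi.single_apply]; try ring
  · simp [Pi.single_apply, h]

lemma pd_comp_mul_coord {x : CWPt n} {a : ℝ} {f : ℝ → ℝ} {f' : ℝ}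
    (hf : HasDerivAt f f' (a * x (Sum.inl 1))) (c : ℝ) (i : Fin n) (μ : CWIdx n) :
    pd μ (fun y : CWPt n => c * f (a * y (Sum.inl 1)) * y (Sum.inr i)) x =
      (if (Sum.inl 1 : CWIdx n) = μ then c * (f' * a) * x (Sum.inr i) else 0)
      + (if (Sum.inr i : CWIdx n) = μ then c * f (a * x (Sum.inl 1)) else 0) := by
  have h1 : HasFDerivAt (fun y : CWPt n => a * y (Sum.inl 1)) (a • prj (Sum.inl 1)) x :=
    (hasFDerivAt_coord _ x).const_mul a
  have h2 : HasFDerivAt (fun y : CWPt n => c * f (a * y (Sum.inl 1)))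
      (c • ((f' : ℝ) • (a • prj (Sum.inl 1)))) x :=
    (hf.comp_hasFDerivAt x h1).const_mul c
  have h3 := h2.fun_mul (hasFDerivAt_coord (Sum.inr i) x)
  rw [pd_of_hasFDerivAt h3]
  rcases μ with a' | k
  · fin_cases a' <;> simp [Pi.single_apply] <;> ring
  · by_cases hk : i = k
    · subst hk; simp [Pi.single_apply]; try ring
    · simp [Pi.single_apply, hk, Ne.symm hk]

lemma pd_quad (lam : Fin n → ℝ) (x : CWPt n) (μ : CWIdx n) :
    pd μ (fun y : CWPt n => -(∑ i, lam i ^ 2 * (y (Sum.inr i) * y (Sum.inr i)))) x =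
      Sum.elim (fun _ => (0:ℝ)) (fun k => -(2 * lam k ^ 2 * x (Sum.inr k))) μ := by
  have h : HasFDerivAt (fun y : CWPt n => ∑ i, lam i ^ 2 * (y (Sum.inr i) * y (Sum.inr i)))
      (∑ i, (lam i ^ 2) • ((x (Sum.inr i)) • prj (Sum.inr i) + (x (Sum.inr i)) • prj (Sum.inr i))) x := by
    refine HasFDerivAt.fun_sum fun i _ => ?_
    exact (((hasFDerivAt_coord (Sum.inr i) x).mul (hasFDerivAt_coord (Sum.inr i) x)).const_mul _)
  rw [pd_of_hasFDerivAt h.fun_neg]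
  rcases μ with a | k
  · simp [Pi.single_apply]
  · simp [Pi.single_apply, Finset.mul_sum]
    rw [Finset.sum_eq_single k]
    · simp; ring
    · intro b _ hb; simp [hb]
    · simp

lemma gB_diag_eq (lam : Fin n → ℝ) (y : CWPt n) :
    gB (Matrix.diagonal fun i => lam i ^ 2) y (Sum.inl 1) (Sum.inl 1) =
      -(∑ i, lam i ^ 2 * (y (Sum.inr i) * y (Sum.inr i))) := by
  norm_num [gB, Matrix.diagonal, Matrix.of_apply, ite_mul, zero_mul, Finset.sum_ite_eq, mul_assoc]

lemma pd_g (lam : Fin n → ℝ) (x : CWPt n) (κ μ ν : CWIdx n) :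
    pd κ (fun y => gB (Matrix.diagonal fun i => lam i ^ 2) y μ ν) x =
      if μ = Sum.inl 1 ∧ ν = Sum.inl 1 then
        Sum.elim (fun _ => (0:ℝ)) (fun k => -(2 * lam k ^ 2 * x (Sum.inr k))) κ
      else 0 := by
  rcases μ with a | i
  · rcases ν with b | j
    · by_cases h11 : a = 1 ∧ b = 1
      · obtain ⟨ha, hb⟩ := h11; subst ha; subst hb
        rw [show (fun y => gB (Matrix.diagonal fun i => lam i ^ 2) y (Sum.inl 1) (Sum.inl 1))
            = fun y : CWPt n => -(∑ i, lam i ^ 2 * (y (Sum.inr i) * y (Sum.inr i))) from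
            funext fun y => gB_diag_eq lam y]
        simp [pd_quad]
      · rw [show (fun y => gB (Matrix.diagonal fun i => lam i ^ 2) y (Sum.inl a) (Sum.inl b))
            = fun _ : CWPt n => if a = 0 ∧ b = 1 then (1:ℝ) else if a = 1 ∧ b = 0 then 1 else 0 from
            funext fun y => by simp only [gB, h11, if_false]]
        simp [pd_const, h11]
    · simp only [gB]
      simp [pd_const]
  · rcases ν with b | j
    · simp only [gB]
      simp [pd_const]
    · by_cases h : i = j
      · subst h
        rw [show (fun y => gB (Matrix.diagonal fun i => lam i ^ 2) y (Sum.inr i) (Sum.inr i))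
            = fun _ : CWPt n => (1:ℝ) from funext fun y => by simp [gB]]
        simp [pd_const]
      · rw [show (fun y => gB (Matrix.diagonal fun i => lam i ^ 2) y (Sum.inr i) (Sum.inr j))
            = fun _ : CWPt n => (0:ℝ) from funext fun y => by simp [gB, h]]
        simp [pd_const]

end KillingHelpers
section Components
variable {n : ℕ} (lam : Fin n → ℝ) (i j : Fin n) (x : CWPt n) (μ : CWIdx n)

lemma pd_Kplus (κ : CWIdx n) : pd μ (fun y => Kplus y κ) x = 0 := by
  simp only [Kplus]; exact pd_const μ x _

lemma pd_Kminus (κ : CWIdx n) : pd μ (fun y => Kminus y κ) x = 0 := by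
  simp only [Kminus]; exact pd_const μ x _

lemma pd_Ki_plus : pd μ (fun y => Ki lam i y (Sum.inl 0)) x =
    (if (Sum.inl 1 : CWIdx n) = μ then lam i * (Real.cos (lam i * x (Sum.inl 1)) * lam i) * x (Sum.inr i) else 0)
    + (if (Sum.inr i : CWIdx n) = μ then lam i * Real.sin (lam i * x (Sum.inl 1)) else 0) := by
  rw [show (fun y => Ki lam i y (Sum.inl 0))
      = fun y : CWPt n => lam i * Real.sin (lam i * y (Sum.inl 1)) * y (Sum.inr i) from
      funext fun y => by simp [Ki, Pi.single_apply]]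
  exact pd_comp_mul_coord (Real.hasDerivAt_sin _) _ _ _

lemma pd_Ki_minus : pd μ (fun y => Ki lam i y (Sum.inl 1)) x = 0 := by
  rw [show (fun y => Ki lam i y (Sum.inl 1)) = fun _ : CWPt n => (0:ℝ) from
      funext fun y => by simp [Ki, Pi.single_apply]]
  exact pd_const μ x _

lemma pd_Ki_inr (k : Fin n) : pd μ (fun y => Ki lam i y (Sum.inr k)) x =
    if k = i then (if (Sum.inl 1 : CWIdx n) = μ then -Real.sin (lam i * x (Sum.inl 1)) * lam i else 0) else 0 := by
  by_cases hk : k = i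
  · subst hk
    rw [show (fun y => Ki lam k y (Sum.inr k))
        = fun y : CWPt n => Real.cos (lam k * y (Sum.inl 1)) from
        funext fun y => by simp [Ki, Pi.single_apply]]
    simp [pd_comp1 (Real.hasDerivAt_cos _) μ]
  · rw [show (fun y => Ki lam i y (Sum.inr k)) = fun _ : CWPt n => (0:ℝ) from
        funext fun y => by simp [Ki, Pi.single_apply, hk]]
    simp [pd_const, hk]

lemma pd_Kistar_plus : pd μ (fun y => Kistar lam i y (Sum.inl 0)) x =
    (if (Sum.inl 1 : CWIdx n) = μ then lam i ^ 2 * (-Real.sin (lam i * x (Sum.inl 1)) * lam i) * x (Sum.inr i) else 0)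
    + (if (Sum.inr i : CWIdx n) = μ then lam i ^ 2 * Real.cos (lam i * x (Sum.inl 1)) else 0) := by
  rw [show (fun y => Kistar lam i y (Sum.inl 0))
      = fun y : CWPt n => lam i ^ 2 * Real.cos (lam i * y (Sum.inl 1)) * y (Sum.inr i) from
      funext fun y => by simp [Kistar, Pi.single_apply]]
  exact pd_comp_mul_coord (Real.hasDerivAt_cos _) _ _ _

lemma pd_Kistar_minus : pd μ (fun y => Kistar lam i y (Sum.inl 1)) x = 0 := by
  rw [show (fun y => Kistar lam i y (Sum.inl 1)) = fun _ : CWPt n => (0:ℝ) from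
      funext fun y => by simp [Kistar, Pi.single_apply]]
  exact pd_const μ x _

lemma pd_Kistar_inr (k : Fin n) : pd μ (fun y => Kistar lam i y (Sum.inr k)) x =
    if k = i then (if (Sum.inl 1 : CWIdx n) = μ then -(lam i * (Real.cos (lam i * x (Sum.inl 1)) * lam i)) else 0) else 0 := by
  by_cases hk : k = i
  · subst hk
    rw [show (fun y => Kistar lam k y (Sum.inr k))
        = fun y : CWPt n => -(lam k * Real.sin (lam k * y (Sum.inl 1))) from
        funext fun y => by simp [Kistar, Pi.single_apply]]
    have h := ((Real.hasDerivAt_sin (lam k * x (Sum.inl 1))).const_mul (lam k)).neg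
    simpa [mul_comm] using pd_comp1 (f := fun t => -(lam k * Real.sin t)) h μ
  · rw [show (fun y => Kistar lam i y (Sum.inr k)) = fun _ : CWPt n => (0:ℝ) from
        funext fun y => by simp [Kistar, Pi.single_apply, hk]]
    simp [pd_const, hk]

lemma pd_Kij_plus : pd μ (fun y => Kij i j y (Sum.inl 0)) x = 0 := by
  rw [show (fun y => Kij i j y (Sum.inl 0)) = fun _ : CWPt n => (0:ℝ) from
      funext fun y => by simp [Kij, Pi.single_apply]]
  exact pd_const μ x _

lemma pd_Kij_minus : pd μ (fun y => Kij i j y (Sum.inl 1)) x = 0 := by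
  rw [show (fun y => Kij i j y (Sum.inl 1)) = fun _ : CWPt n => (0:ℝ) from
      funext fun y => by simp [Kij, Pi.single_apply]]
  exact pd_const μ x _

lemma pd_Kij_inr (k : Fin n) : pd μ (fun y => Kij i j y (Sum.inr k)) x =
    (if k = i then (if (Sum.inr j : CWIdx n) = μ then 1 else 0) else 0)
    - (if k = j then (if (Sum.inr i : CWIdx n) = μ then 1 else 0) else 0) := by
  by_cases h1 : k = i <;> by_cases h2 : k = j
  · subst h1; subst h2
    rw [show (fun y => Kij k k y (Sum.inr k)) = fun y : CWPt n => y (Sum.inr k) - y (Sum.inr k) from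
        funext fun y => by simp [Kij, Pi.single_apply]]
    rw [pd_coord_sub]; simp
  · subst h1
    rw [show (fun y => Kij k j y (Sum.inr k)) = fun y : CWPt n => y (Sum.inr j) from
        funext fun y => by simp [Kij, Pi.single_apply, Ne.symm h2, h2]]
    rw [pd_coord]; simp [h2]
  · subst h2
    rw [show (fun y => Kij i k y (Sum.inr k)) = fun y : CWPt n => -(y (Sum.inr i)) from
        funext fun y => by simp [Kij, Pi.single_apply, h1]]
    rw [pd_neg_coord]; simp [h1]
  · rw [show (fun y => Kij i j y (Sum.inr k)) = fun _ : CWPt n => (0:ℝ) from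
        funext fun y => by simp [Kij, Pi.single_apply, h1, h2]]
    simp [pd_const, h1, h2]

end Components
section GVals
variable {n : ℕ} (lam : Fin n → ℝ) (x : CWPt n)

lemma gB_plus_right (ν : CWIdx n) :
    gB (Matrix.diagonal fun i => lam i ^ 2) x (Sum.inl 0) ν = if ν = Sum.inl 1 then 1 else 0 := by
  rcases ν with b | j <;> simp [gB]

lemma gB_right_plus (μ : CWIdx n) :
    gB (Matrix.diagonal fun i => lam i ^ 2) x μ (Sum.inl 0) = if μ = Sum.inl 1 then 1 else 0 := by
  rcases μ with a | i <;> simp [gB]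

lemma gB_inr_right (k : Fin n) (ν : CWIdx n) :
    gB (Matrix.diagonal fun i => lam i ^ 2) x (Sum.inr k) ν = if ν = Sum.inr k then 1 else 0 := by
  rcases ν with b | j <;> simp [gB]
  simp [eq_comm]

lemma gB_right_inr (μ : CWIdx n) (k : Fin n) :
    gB (Matrix.diagonal fun i => lam i ^ 2) x μ (Sum.inr k) = if μ = Sum.inr k then 1 else 0 := by
  rcases μ with a | i <;> simp [gB]

lemma gB_minus_right (ν : CWIdx n) :
    gB (Matrix.diagonal fun i => lam i ^ 2) x (Sum.inl 1) ν =
      if ν = Sum.inl 0 then 1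
      else if ν = Sum.inl 1 then -(∑ i, lam i ^ 2 * (x (Sum.inr i) * x (Sum.inr i))) else 0 := by
  rcases ν with b | j
  · by_cases hb : b = 0
    · subst hb; simp [gB]
    · have hb1 : b = 1 := by omega
      subst hb1; simpa using gB_diag_eq lam x
  · simp [gB]

lemma gB_right_minus (μ : CWIdx n) :
    gB (Matrix.diagonal fun i => lam i ^ 2) x μ (Sum.inl 1) =
      if μ = Sum.inl 0 then 1
      else if μ = Sum.inl 1 then -(∑ i, lam i ^ 2 * (x (Sum.inr i) * x (Sum.inr i))) else 0 := by
  rcases μ with a | i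
  · by_cases ha : a = 0
    · subst ha; simp [gB]
    · have ha1 : a = 1 := by omega
      subst ha1; simpa using gB_diag_eq lam x
  · simp [gB]

end GVals


/-- For `B = diag(λ₁², …, λₙ²)` the vector fields `K₊`, `K₋`, `K_{(i)}`, `K_{(i*)}`, and
(for `i ≠ j` with `λ_i² = λ_j²`) `K_{(ij)}` are Killing for `g_B`. -/
theorem killing_fields {n : ℕ} (lam : Fin n → ℝ) :
    IsKilling (Matrix.diagonal fun i => lam i ^ 2) (Kplus (n := n)) ∧
    IsKilling (Matrix.diagonal fun i => lam i ^ 2) (Kminus (n := n)) ∧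
    (∀ i : Fin n, IsKilling (Matrix.diagonal fun i => lam i ^ 2) (Ki lam i)) ∧
    (∀ i : Fin n, IsKilling (Matrix.diagonal fun i => lam i ^ 2) (Kistar lam i)) ∧
    (∀ i j : Fin n, i ≠ j → lam i ^ 2 = lam j ^ 2 →
      IsKilling (Matrix.diagonal fun i => lam i ^ 2) (Kij i j)) := by
  refine ⟨?_, ?_, ?_, ?_, ?_⟩
  · intro x μ ν
    rw [Fintype.sum_sum_type, Fintype.sum_sum_type, Fintype.sum_sum_type,
      Fin.sum_univ_two, Fin.sum_univ_two, Fin.sum_univ_two]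
    simp only [pd_g, pd_Kplus, Sum.elim_inl, Sum.elim_inr]
    simp [Kplus, Pi.single_apply]
  · intro x μ ν
    rw [Fintype.sum_sum_type, Fintype.sum_sum_type, Fintype.sum_sum_type,
      Fin.sum_univ_two, Fin.sum_univ_two, Fin.sum_univ_two]
    simp only [pd_g, pd_Kminus, Sum.elim_inl, Sum.elim_inr]
    simp [Kminus, Pi.single_apply]
  · intro i x μ ν
    rw [Fintype.sum_sum_type, Fintype.sum_sum_type, Fintype.sum_sum_type,
      Fin.sum_univ_two, Fin.sum_univ_two, Fin.sum_univ_two]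
    simp only [pd_g, pd_Ki_plus, pd_Ki_minus, pd_Ki_inr, Sum.elim_inl, Sum.elim_inr]
    rcases μ with (⟨_|_|am, hm⟩ | mi) <;> rcases ν with (⟨_|_|an, hn⟩ | ni) <;>
      first
        | (exact absurd hm (by omega))
        | (exact absurd hn (by omega))
        | (simp [Ki, Pi.single_apply, gB_plus_right, gB_right_plus, gB_inr_right, gB_right_inr,
            gB_minus_right, gB_right_minus,
            Finset.sum_ite_eq, Finset.sum_ite_eq', mul_ite, ite_mul, Finset.mul_sum,
            Fin.mk_zero, Fin.mk_one, (show (0:Fin 2) ≠ 1 by decide), (show (1:Fin 2) ≠ 0 by decide)]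
           ;
           all_goals (try ring);
           all_goals (split_ifs <;> simp_all))
  · intro i x μ ν
    rw [Fintype.sum_sum_type, Fintype.sum_sum_type, Fintype.sum_sum_type,
      Fin.sum_univ_two, Fin.sum_univ_two, Fin.sum_univ_two]
    simp only [pd_g, pd_Kistar_plus, pd_Kistar_minus, pd_Kistar_inr, Sum.elim_inl, Sum.elim_inr]
    rcases μ with (⟨_|_|am, hm⟩ | mi) <;> rcases ν with (⟨_|_|an, hn⟩ | ni) <;>
      first
        | (exact absurd hm (by omega))
        | (exact absurd hn (by omega))
        | (simp [Kistar, Pi.single_apply, gB_plus_right, gB_right_plus, gB_inr_right, gB_right_inr,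
            gB_minus_right, gB_right_minus,
            Finset.sum_ite_eq, Finset.sum_ite_eq', mul_ite, ite_mul, Finset.mul_sum,
            Fin.mk_zero, Fin.mk_one, (show (0:Fin 2) ≠ 1 by decide), (show (1:Fin 2) ≠ 0 by decide)]
           ;
           all_goals (try ring);
           all_goals (split_ifs <;> simp_all))
  · intro i j hij hl x μ ν
    rw [Fintype.sum_sum_type, Fintype.sum_sum_type, Fintype.sum_sum_type,
      Fin.sum_univ_two, Fin.sum_univ_two, Fin.sum_univ_two]
    simp only [pd_g, pd_Kij_plus, pd_Kij_minus, pd_Kij_inr, Sum.elim_inl, Sum.elim_inr]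
    rcases μ with (⟨_|_|am, hm⟩ | mi) <;> rcases ν with (⟨_|_|an, hn⟩ | ni) <;>
      first
        | (exact absurd hm (by omega))
        | (exact absurd hn (by omega))
        | (simp [Kij, Pi.single_apply, gB_plus_right, gB_right_plus, gB_inr_right, gB_right_inr,
            gB_minus_right, gB_right_minus, hij, hij.symm, sub_mul, mul_sub,
            Finset.sum_ite_eq, Finset.sum_ite_eq', mul_ite, ite_mul, Finset.mul_sum,
            Finset.sum_sub_distrib,
            Fin.mk_zero, Fin.mk_one, (show (0:Fin 2) ≠ 1 by decide), (show (1:Fin 2) ≠ 0 by decide)]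
           ;
           all_goals (try ring);
           all_goals (try (rw [hl]; ring));
           all_goals (split_ifs <;> (try subst_vars) <;> simp_all <;> try ring))
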